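/- Let h : {0,1,2}* → {0,1}* be the morphism with h(0)=1, h(1)=10, h(2)=100. Then h is injective on {0,1,2}*, and every word s ∈ {0,1}* can be written in one of the forms y, yw, (zx)*z, yx(zx)*z, (zx)*zw, or yx(zx)*zw, where y ∈ {ε, 0, 00}, x ∈ {1,10,100}*·1, z ∈ 000·0*, and w ∈ {1,10,100}^+. -/

import Mathlib

open Computability

/-- The morphism `h : {0,1,2}* → {0,1}*` with `h(0) = 1`, `h(1) = 10`, `h(2) = 100`. -/
def hMorph : List (Fin 3) → List (Fin 2) :=
  fun s => s.flatMap fun c =>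
    if c = 0 then [1] else if c = 1 then [1, 0] else [1, 0, 0]

namespace HMAux

/-- decoder for the suffix-free-ish code: greedy longest match works since
no codeword starts with `0`. -/
def decode : List (Fin 2) → List (Fin 3)
  | [] => []
  | [_] => [0]
  | [_, b] => if b = 0 then [1] else [0, 0]
  | _ :: b :: c :: rest =>
    if b = 0 then
      if c = 0 then 2 :: decode rest
      else 1 :: decode (c :: rest)
    else 0 :: decode (b :: c :: rest)
  termination_by l => l.length

lemma hMorph_cons (a : Fin 3) (s : List (Fin 3)) :
    hMorph (a :: s) =
      (if a = 0 then [1] else if a = 1 then [1, 0] else [1, 0, 0]) ++ hMorph s := by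
  simp [hMorph]

lemma hMorph_start (s : List (Fin 3)) : hMorph s = [] ∨ ∃ t, hMorph s = 1 :: t := by
  cases s with
  | nil => left; rfl
  | cons a s =>
    right
    fin_cases a <;> simp [hMorph_cons]

lemma hMorph_eq_nil {s : List (Fin 3)} (h : hMorph s = []) : s = [] := by
  cases s with
  | nil => rfl
  | cons a s =>
    rw [hMorph_cons] at h
    fin_cases a <;> simp at h

lemma decode_one_one (t : List (Fin 2)) : decode (1 :: 1 :: t) = 0 :: decode (1 :: t) := by
  cases t <;> simp [decode]

lemma decode_hMorph (s : List (Fin 3)) : decode (hMorph s) = s := by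
  induction s with
  | nil => simp [hMorph, decode]
  | cons a s ih =>
    rw [hMorph_cons]
    rcases hMorph_start s with h | ⟨t, h⟩ <;> rw [h] at ih ⊢
    · obtain rfl : s = [] := hMorph_eq_nil h
      fin_cases a <;> simp [decode]
    · fin_cases a
      · simpa [decode_one_one] using congrArg (List.cons (0 : Fin 3)) ih
      · simpa [decode] using congrArg (List.cons (1 : Fin 3)) ih
      · simpa [decode] using congrArg (List.cons (2 : Fin 3)) ih

lemma hMorph_injective : Function.Injective hMorph := by
  intro u v h
  rw [← decode_hMorph u, ← decode_hMorph v, h]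

/-! ### The decomposition -/

def Y : Language (Fin 2) := {[], [0], [0, 0]}
def C : Language (Fin 2) := {[1], [1, 0], [1, 0, 0]}
def X : Language (Fin 2) := C∗ * {[1]}
def Z : Language (Fin 2) := {[0, 0, 0]} * ({[0]} : Language (Fin 2))∗
def W : Language (Fin 2) := C∗ * C

lemma mem_Y_iff {y : List (Fin 2)} : y ∈ Y ↔ y = [] ∨ y = [0] ∨ y = [0, 0] := Iff.rfl

lemma nil_mem_Y : [] ∈ Y := mem_Y_iff.2 (Or.inl rfl)

lemma cons_kstar {α : Type*} {M : Language α} {q r : List α}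
    (hq : q ∈ M) (hr : r ∈ M∗) : q ++ r ∈ M∗ := by
  rcases Language.mem_kstar.1 hr with ⟨L, rfl, hL⟩
  have : (q :: L).flatten ∈ M∗ :=
    Language.join_mem_kstar (by
      intro y hy
      rcases List.mem_cons.1 hy with rfl | hy
      · exact hq
      · exact hL y hy)
  simpa using this

lemma kstar_cases {α : Type*} {M : Language α} {p : List α} (hp : p ∈ M∗) :
    p = [] ∨ ∃ q r, q ∈ M ∧ r ∈ M∗ ∧ p = q ++ r := by
  rcases Language.mem_kstar.1 hp with ⟨L, rfl, hL⟩
  cases L with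
  | nil => left; rfl
  | cons q L =>
    right
    exact ⟨q, L.flatten, hL q List.mem_cons_self,
      Language.join_mem_kstar (fun y hy => hL y (List.mem_cons_of_mem q hy)), by simp⟩

lemma one_cons_Y_mem_C {y : List (Fin 2)} (hy : y ∈ Y) : (1 :: y) ∈ C := by
  rcases mem_Y_iff.1 hy with rfl | rfl | rfl
  · exact Or.inl rfl
  · exact Or.inr (Or.inl rfl)
  · exact Or.inr (Or.inr rfl)

lemma C_mem_W {c : List (Fin 2)} (hc : c ∈ C) : c ∈ W :=
  Language.mem_mul.2 ⟨[], Language.nil_mem_kstar _, c, hc, by simp⟩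

lemma cons_C_W {c w : List (Fin 2)} (hc : c ∈ C) (hw : w ∈ W) : c ++ w ∈ W := by
  rcases Language.mem_mul.1 hw with ⟨u, hu, d, hd, rfl⟩
  exact Language.mem_mul.2 ⟨c ++ u, cons_kstar hc hu, d, hd, by simp⟩

lemma one_mem_X : [1] ∈ X :=
  Language.mem_mul.2 ⟨[], Language.nil_mem_kstar _, [1], rfl, by simp⟩

lemma cons_C_X {c x : List (Fin 2)} (hc : c ∈ C) (hx : x ∈ X) : c ++ x ∈ X := by
  rcases Language.mem_mul.1 hx with ⟨u, hu, d, hd, rfl⟩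
  exact Language.mem_mul.2 ⟨c ++ u, cons_kstar hc hu, d, hd, by simp⟩

lemma zzz_mem_Z : [0, 0, 0] ∈ Z :=
  Language.mem_mul.2 ⟨[0, 0, 0], rfl, [], Language.nil_mem_kstar _, by simp⟩

lemma zero_cons_Z {z : List (Fin 2)} (hz : z ∈ Z) : (0 :: z) ∈ Z := by
  rcases Language.mem_mul.1 hz with ⟨u, hu, d, hd, rfl⟩
  have hu' : u = [0, 0, 0] := hu
  subst hu'
  exact Language.mem_mul.2 ⟨[0, 0, 0], rfl, [0] ++ d, cons_kstar rfl hd, by simp⟩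

lemma decomp (s : List (Fin 2)) :
    s ∈ Y ∨ s ∈ Y * W ∨ s ∈ (Z * X)∗ * Z ∨ s ∈ Y * X * ((Z * X)∗ * Z) ∨
      s ∈ (Z * X)∗ * Z * W ∨ s ∈ Y * X * ((Z * X)∗ * Z) * W := by
  induction s with
  | nil => exact Or.inl nil_mem_Y
  | cons a s ih =>
    fin_cases a
    · -- a = 0
      rcases ih with h | h | h | h | h | h
      · rcases mem_Y_iff.1 h with rfl | rfl | rfl
        · exact Or.inl (mem_Y_iff.2 (Or.inr (Or.inl rfl)))
        · exact Or.inl (mem_Y_iff.2 (Or.inr (Or.inr rfl)))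
        · exact Or.inr (Or.inr (Or.inl (Language.mem_mul.2
            ⟨[], Language.nil_mem_kstar _, [0, 0, 0], zzz_mem_Z, by simp⟩)))
      · rcases Language.mem_mul.1 h with ⟨y, hy, w, hw, rfl⟩
        rcases mem_Y_iff.1 hy with rfl | rfl | rfl
        · exact Or.inr (Or.inl (Language.mem_mul.2
            ⟨[0], mem_Y_iff.2 (Or.inr (Or.inl rfl)), w, hw, by simp⟩))
        · exact Or.inr (Or.inl (Language.mem_mul.2
            ⟨[0, 0], mem_Y_iff.2 (Or.inr (Or.inr rfl)), w, hw, by simp⟩))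
        · refine Or.inr (Or.inr (Or.inr (Or.inr (Or.inl (Language.mem_mul.2
            ⟨[0, 0, 0], ?_, w, hw, by simp⟩)))))
          exact Language.mem_mul.2 ⟨[], Language.nil_mem_kstar _, [0, 0, 0], zzz_mem_Z, by simp⟩
      · rcases Language.mem_mul.1 h with ⟨p, hp, z, hz, rfl⟩
        rcases kstar_cases hp with rfl | ⟨q, r, hq, hr, rfl⟩
        · exact Or.inr (Or.inr (Or.inl (Language.mem_mul.2
            ⟨[], Language.nil_mem_kstar _, 0 :: z, zero_cons_Z hz, by simp⟩)))
        · rcases Language.mem_mul.1 hq with ⟨z', hz', x, hx, rfl⟩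
          refine Or.inr (Or.inr (Or.inl (Language.mem_mul.2
            ⟨((0 :: z') ++ x) ++ r, ?_, z, hz, by simp⟩)))
          exact cons_kstar (Language.append_mem_mul (zero_cons_Z hz') hx) hr
      · rcases Language.mem_mul.1 h with ⟨t, ht, r, hr, rfl⟩
        rcases Language.mem_mul.1 ht with ⟨y, hy, x, hx, rfl⟩
        rcases mem_Y_iff.1 hy with rfl | rfl | rfl
        · refine Or.inr (Or.inr (Or.inr (Or.inl (Language.mem_mul.2
            ⟨[0] ++ x, ?_, r, hr, by simp⟩))))
          exact Language.mem_mul.2 ⟨[0], mem_Y_iff.2 (Or.inr (Or.inl rfl)), x, hx, rfl⟩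
        · refine Or.inr (Or.inr (Or.inr (Or.inl (Language.mem_mul.2
            ⟨[0, 0] ++ x, ?_, r, hr, by simp⟩))))
          exact Language.mem_mul.2 ⟨[0, 0], mem_Y_iff.2 (Or.inr (Or.inr rfl)), x, hx, rfl⟩
        · rcases Language.mem_mul.1 hr with ⟨p, hp, z, hz, rfl⟩
          refine Or.inr (Or.inr (Or.inl (Language.mem_mul.2
            ⟨([0, 0, 0] ++ x) ++ p, ?_, z, hz, by simp⟩)))
          exact cons_kstar (Language.append_mem_mul zzz_mem_Z hx) hp
      · rcases Language.mem_mul.1 h with ⟨r, hr, w, hw, rfl⟩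
        rcases Language.mem_mul.1 hr with ⟨p, hp, z, hz, rfl⟩
        rcases kstar_cases hp with rfl | ⟨q, r', hq, hr', rfl⟩
        · refine Or.inr (Or.inr (Or.inr (Or.inr (Or.inl (Language.mem_mul.2
            ⟨0 :: z, ?_, w, hw, by simp⟩)))))
          exact Language.mem_mul.2 ⟨[], Language.nil_mem_kstar _, 0 :: z, zero_cons_Z hz, by simp⟩
        · rcases Language.mem_mul.1 hq with ⟨z', hz', x, hx, rfl⟩
          refine Or.inr (Or.inr (Or.inr (Or.inr (Or.inl (Language.mem_mul.2
            ⟨(((0 :: z') ++ x) ++ r') ++ z, ?_, w, hw, by simp⟩)))))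
          exact Language.mem_mul.2 ⟨((0 :: z') ++ x) ++ r',
            cons_kstar (Language.append_mem_mul (zero_cons_Z hz') hx) hr', z, hz, rfl⟩
      · rcases Language.mem_mul.1 h with ⟨u, hu, w, hw, rfl⟩
        rcases Language.mem_mul.1 hu with ⟨t, ht, r, hr, rfl⟩
        rcases Language.mem_mul.1 ht with ⟨y, hy, x, hx, rfl⟩
        rcases mem_Y_iff.1 hy with rfl | rfl | rfl
        · refine Or.inr (Or.inr (Or.inr (Or.inr (Or.inr (Language.mem_mul.2
            ⟨([0] ++ x) ++ r, ?_, w, hw, by simp⟩)))))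
          exact Language.mem_mul.2 ⟨[0] ++ x,
            Language.mem_mul.2 ⟨[0], mem_Y_iff.2 (Or.inr (Or.inl rfl)), x, hx, rfl⟩, r, hr, rfl⟩
        · refine Or.inr (Or.inr (Or.inr (Or.inr (Or.inr (Language.mem_mul.2
            ⟨([0, 0] ++ x) ++ r, ?_, w, hw, by simp⟩)))))
          exact Language.mem_mul.2 ⟨[0, 0] ++ x,
            Language.mem_mul.2 ⟨[0, 0], mem_Y_iff.2 (Or.inr (Or.inr rfl)), x, hx, rfl⟩, r, hr, rfl⟩
        · rcases Language.mem_mul.1 hr with ⟨p, hp, z, hz, rfl⟩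
          refine Or.inr (Or.inr (Or.inr (Or.inr (Or.inl (Language.mem_mul.2
            ⟨(([0, 0, 0] ++ x) ++ p) ++ z, ?_, w, hw, by simp⟩)))))
          exact Language.mem_mul.2 ⟨([0, 0, 0] ++ x) ++ p,
            cons_kstar (Language.append_mem_mul zzz_mem_Z hx) hp, z, hz, rfl⟩
    · -- a = 1
      rcases ih with h | h | h | h | h | h
      · exact Or.inr (Or.inl (Language.mem_mul.2
          ⟨[], nil_mem_Y, 1 :: s, C_mem_W (one_cons_Y_mem_C h), by simp⟩))
      · rcases Language.mem_mul.1 h with ⟨y, hy, w, hw, rfl⟩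
        exact Or.inr (Or.inl (Language.mem_mul.2
          ⟨[], nil_mem_Y, (1 :: y) ++ w, cons_C_W (one_cons_Y_mem_C hy) hw, by simp⟩))
      · refine Or.inr (Or.inr (Or.inr (Or.inl (Language.mem_mul.2
          ⟨[1], ?_, s, h, by simp⟩))))
        exact Language.mem_mul.2 ⟨[], nil_mem_Y, [1], one_mem_X, rfl⟩
      · rcases Language.mem_mul.1 h with ⟨t, ht, r, hr, rfl⟩
        rcases Language.mem_mul.1 ht with ⟨y, hy, x, hx, rfl⟩
        refine Or.inr (Or.inr (Or.inr (Or.inl (Language.mem_mul.2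
          ⟨(1 :: y) ++ x, ?_, r, hr, by simp⟩))))
        exact Language.mem_mul.2 ⟨[], nil_mem_Y, (1 :: y) ++ x,
          cons_C_X (one_cons_Y_mem_C hy) hx, by simp⟩
      · rcases Language.mem_mul.1 h with ⟨r, hr, w, hw, rfl⟩
        refine Or.inr (Or.inr (Or.inr (Or.inr (Or.inr (Language.mem_mul.2
          ⟨[1] ++ r, ?_, w, hw, by simp⟩)))))
        exact Language.mem_mul.2 ⟨[1],
          Language.mem_mul.2 ⟨[], nil_mem_Y, [1], one_mem_X, rfl⟩, r, hr, rfl⟩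
      · rcases Language.mem_mul.1 h with ⟨u, hu, w, hw, rfl⟩
        rcases Language.mem_mul.1 hu with ⟨t, ht, r, hr, rfl⟩
        rcases Language.mem_mul.1 ht with ⟨y, hy, x, hx, rfl⟩
        refine Or.inr (Or.inr (Or.inr (Or.inr (Or.inr (Language.mem_mul.2
          ⟨((1 :: y) ++ x) ++ r, ?_, w, hw, by simp⟩)))))
        exact Language.mem_mul.2 ⟨(1 :: y) ++ x,
          Language.mem_mul.2 ⟨[], nil_mem_Y, (1 :: y) ++ x,
            cons_C_X (one_cons_Y_mem_C hy) hx, by simp⟩, r, hr, rfl⟩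

end HMAux

theorem hMorph_injective_and_decomposition :
    Function.Injective hMorph ∧
    ∀ s : List (Fin 2),
      let Y : Language (Fin 2) := {[], [0], [0, 0]}
      let C : Language (Fin 2) := {[1], [1, 0], [1, 0, 0]}
      let X : Language (Fin 2) := C∗ * {[1]}
      let Z : Language (Fin 2) := {[0, 0, 0]} * ({[0]} : Language (Fin 2))∗
      let W : Language (Fin 2) := C∗ * C
      s ∈ Y ∨ s ∈ Y * W ∨ s ∈ (Z * X)∗ * Z ∨ s ∈ Y * X * ((Z * X)∗ * Z) ∨
        s ∈ (Z * X)∗ * Z * W ∨ s ∈ Y * X * ((Z * X)∗ * Z) * W :=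
  ⟨HMAux.hMorph_injective, fun s => HMAux.decomp s⟩
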